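/- Let Z be a real random variable with E[Z] = 0 and E[e^{δZ}] ≤ C for some δ > 0 and C ≥ 1. Then for any λ > 0, P(Z ≤ -λ) ≤ C·e/(δλ). More precisely, with p = P(Z ≤ -λ), one has (1-p)·exp(δλ·p/(1-p)) ≤ C, and hence p ≤ (1-p)·log(C/(1-p))/(δλ). -/

import Mathlib

open MeasureTheory

theorem exp_moment_lower_tail {Ω : Type*} [MeasurableSpace Ω] (P : Measure Ω)
    [IsProbabilityMeasure P] (Z : Ω → ℝ) (hZmeas : Measurable Z)
    (hZint : Integrable Z P) (hZmean : ∫ ω, Z ω ∂P = 0)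
    (δ C : ℝ) (hδ : 0 < δ) (hC : 1 ≤ C)
    (hexpint : Integrable (fun ω => Real.exp (δ * Z ω)) P)
    (hexp : ∫ ω, Real.exp (δ * Z ω) ∂P ≤ C)
    (lam : ℝ) (hlam : 0 < lam) :
    (1 - (P {ω | Z ω ≤ -lam}).toReal) *
        Real.exp (δ * lam * (P {ω | Z ω ≤ -lam}).toReal /
          (1 - (P {ω | Z ω ≤ -lam}).toReal)) ≤ C ∧
      (P {ω | Z ω ≤ -lam}).toReal ≤
        (1 - (P {ω | Z ω ≤ -lam}).toReal) *
          Real.log (C / (1 - (P {ω | Z ω ≤ -lam}).toReal)) / (δ * lam) ∧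
      (P {ω | Z ω ≤ -lam}).toReal ≤ C * Real.exp 1 / (δ * lam) := by
  have hC0 : (0:ℝ) < C := lt_of_lt_of_le one_pos hC
  set A := {ω | Z ω ≤ -lam} with hAdef
  have hAmeas : MeasurableSet A := hZmeas measurableSet_Iic
  set p := (P A).toReal with hpdef
  have hp0 : 0 ≤ p := ENNReal.toReal_nonneg
  have hp1 : p ≤ 1 := by
    have := ENNReal.toReal_mono (by simp) (prob_le_one (μ := P) (s := A))
    simpa using this
  -- p < 1
  have hPAne1 : P A ≠ 1 := by
    intro h
    have hcompl : P Aᶜ = 0 := by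
      rw [prob_compl_eq_one_sub hAmeas, h, tsub_self]
    have hae : ∀ᵐ ω ∂P, Z ω ≤ -lam := by
      rw [ae_iff]
      convert hcompl using 2
      ext ω; simp [hAdef]
    have : ∫ ω, Z ω ∂P ≤ ∫ _ω, (-lam) ∂P :=
      integral_mono_ae hZint (integrable_const _) hae
    rw [hZmean, integral_const] at this
    simp at this
    linarith
  have hp1' : p < 1 := lt_of_le_of_ne hp1 (fun h => hPAne1 (by
    rwa [hpdef, ENNReal.toReal_eq_one_iff] at h))
  set q := 1 - p with hqdef
  have hq0 : 0 < q := by simp [hqdef]; linarith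
  have hqtoReal : (P Aᶜ).toReal = q := by
    rw [prob_compl_eq_one_sub hAmeas, ENNReal.toReal_sub_of_le prob_le_one (by simp)]
    simp [hpdef]
    rfl
  -- set integral bounds
  have hIA : ∫ ω in A, Z ω ∂P ≤ -lam * p := by
    have : ∫ ω in A, Z ω ∂P ≤ ∫ _ω in A, (-lam) ∂P :=
      setIntegral_mono_on hZint.integrableOn (integrableOn_const)
        hAmeas (fun ω hω => hω)
    rwa [setIntegral_const, smul_eq_mul, mul_comm] at this
  have hsplit : ∫ ω in A, Z ω ∂P + ∫ ω in Aᶜ, Z ω ∂P = 0 := by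
    rw [integral_add_compl hAmeas hZint, hZmean]
  have hIAc : lam * p ≤ ∫ ω in Aᶜ, Z ω ∂P := by nlinarith [hIA, hsplit]
  set t := δ * lam * p / q with htdef
  have htq : t * q = δ * lam * p := div_mul_cancel₀ _ (ne_of_gt hq0)
  -- pointwise tangent bound
  have hpt : ∀ ω, Real.exp t * (δ * Z ω - t + 1) ≤ Real.exp (δ * Z ω) := by
    intro ω
    have h1 := Real.add_one_le_exp (δ * Z ω - t)
    have h2 := mul_le_mul_of_nonneg_left h1 (Real.exp_pos t).le
    rwa [← Real.exp_add, add_sub_cancel] at h2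
  have hint1 : Integrable (fun ω => Real.exp t * (δ * Z ω - t + 1)) P := by
    exact (((hZint.const_mul δ).sub (integrable_const t)).add (integrable_const 1)).const_mul _
  have hkey : q * Real.exp t ≤ C := by
    have h1 : ∫ ω in Aᶜ, Real.exp t * (δ * Z ω - t + 1) ∂P ≤
        ∫ ω in Aᶜ, Real.exp (δ * Z ω) ∂P :=
      setIntegral_mono_on hint1.integrableOn hexpint.integrableOn hAmeas.compl
        (fun ω _ => hpt ω)
    have h2 : ∫ ω in Aᶜ, Real.exp t * (δ * Z ω - t + 1) ∂P =
        Real.exp t * (δ * (∫ ω in Aᶜ, Z ω ∂P) - t * q + q) := by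
      rw [integral_const_mul]
      congr 1
      have hi1 : IntegrableOn (fun a => δ * Z a - t) Aᶜ P :=
        ((hZint.const_mul δ).sub (integrable_const t)).integrableOn
      have hi2 : IntegrableOn (fun a => δ * Z a) Aᶜ P := (hZint.const_mul δ).integrableOn
      rw [integral_add hi1 (integrableOn_const),
        integral_sub hi2 (integrableOn_const),
        integral_const_mul, setIntegral_const, setIntegral_const, measureReal_def, hqtoReal]
      simp only [smul_eq_mul]
      ring
    have h3 : ∫ ω in Aᶜ, Real.exp (δ * Z ω) ∂P ≤ C := by
      refine le_trans (setIntegral_le_integral hexpint ?_) hexp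
      exact ae_of_all _ fun ω => (Real.exp_pos _).le
    have h4 : Real.exp t * q ≤ Real.exp t * (δ * (∫ ω in Aᶜ, Z ω ∂P) - t * q + q) := by
      have : t * q ≤ δ * ∫ ω in Aᶜ, Z ω ∂P := by
        rw [htq]
        calc δ * lam * p = δ * (lam * p) := by ring
        _ ≤ δ * ∫ ω in Aᶜ, Z ω ∂P := by
            exact mul_le_mul_of_nonneg_left hIAc hδ.le
      nlinarith [Real.exp_pos t]
    calc q * Real.exp t = Real.exp t * q := mul_comm _ _
      _ ≤ C := le_trans h4 (h2 ▸ le_trans h1 h3)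
  refine ⟨hkey, ?_, ?_⟩
  · -- second clause
    have hlog : Real.log q + t ≤ Real.log C := by
      have := Real.log_le_log (by positivity) hkey
      rwa [Real.log_mul (ne_of_gt hq0) (ne_of_gt (Real.exp_pos t)), Real.log_exp] at this
    have htle : t ≤ Real.log (C / q) := by
      rw [Real.log_div (ne_of_gt hC0) (ne_of_gt hq0)]; linarith
    rw [le_div_iff₀ (by positivity)]
    calc p * (δ * lam) = q * t := by rw [htdef]; field_simp
      _ ≤ q * Real.log (C / q) := mul_le_mul_of_nonneg_left htle hq0.le
  · -- third clause
    have h2 : p * (δ * lam) ≤ q * Real.log (C / q) := by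
      have hlog : Real.log q + t ≤ Real.log C := by
        have := Real.log_le_log (by positivity) hkey
        rwa [Real.log_mul (ne_of_gt hq0) (ne_of_gt (Real.exp_pos t)), Real.log_exp] at this
      have htle : t ≤ Real.log (C / q) := by
        rw [Real.log_div (ne_of_gt hC0) (ne_of_gt hq0)]; linarith
      calc p * (δ * lam) = q * t := by rw [htdef]; field_simp
        _ ≤ q * Real.log (C / q) := mul_le_mul_of_nonneg_left htle hq0.le
    have h3 : q * Real.log (C / q) ≤ C * Real.exp 1 := by
      have hlogC : Real.log C ≤ C - 1 := Real.log_le_sub_one_of_pos hC0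
      have hqlogC : q * Real.log C ≤ Real.log C :=
        mul_le_of_le_one_left (Real.log_nonneg hC) (by linarith)
      have hnegqlogq : -(q * Real.log q) ≤ 1 - q := by
        have h := Real.log_le_sub_one_of_pos (show (0:ℝ) < 1/q by positivity)
        rw [Real.log_div one_ne_zero (ne_of_gt hq0), Real.log_one] at h
        have h' : q * (0 - Real.log q) ≤ q * (1/q - 1) := mul_le_mul_of_nonneg_left h hq0.le
        have hqq : q * (1/q) = 1 := by field_simp
        nlinarith
      have hexp1 : (1:ℝ) ≤ Real.exp 1 := by
        have := Real.add_one_le_exp (1:ℝ); linarith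
      have : q * Real.log (C / q) = q * Real.log C - q * Real.log q := by
        rw [Real.log_div (ne_of_gt hC0) (ne_of_gt hq0)]; ring
      have hCe : C ≤ C * Real.exp 1 := le_mul_of_one_le_right hC0.le hexp1
      rw [this]
      linarith
    rw [le_div_iff₀ (by positivity)]
    linarith
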